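/- arXiv:1810.06093 — 2 statements merged into one kernel-verified Lean document; each statement's English description precedes it below -/
import Mathlib

section
/- Let n, m < ω, let X₁,…,Xₙ ⊆ ω with X₁ ∩ … ∩ Xₙ infinite, and let I₁,…,Iₙ be partitions of ω into consecutive finite intervals. Then the set D(X₁,…,Xₙ; I₁,…,Iₙ; m) = {s ∈ 2^{<ω} : every x ∈ 2^ω extending s satisfies |coh(X₁,I₁,x) ∩ … ∩ coh(Xₙ,Iₙ,x)| ≥ m} is dense in the partial order (2^{<ω}, ⊇): every s ∈ 2^{<ω} has an extension belonging to it. -/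
open Set

/-- `x ∈ 2^ω` extends `s ∈ 2^{<ω}`: `s` is an initial segment of `x`. -/
def ExtendsSeq (x : ℕ → Bool) (s : List Bool) : Prop :=
  ∀ (i : ℕ) (h : i < s.length), x i = s[i]

/-- `I : ℕ → Set ℕ` is a partition of `ω` into consecutive finite intervals: the pieces
are finite, nonempty, pairwise disjoint, cover `ω`, and every element of `Iₙ` is less
than every element of `I_{n+1}`. -/
structure IntervalPartition (I : ℕ → Set ℕ) : Prop where
  fin : ∀ n, (I n).Finite
  nonempty : ∀ n, (I n).Nonempty
  cover : (⋃ n, I n) = Set.univ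
  disj : ∀ m n, m ≠ n → Disjoint (I m) (I n)
  consec : ∀ n, ∀ a ∈ I n, ∀ b ∈ I (n + 1), a < b

/-- Minimum of a set of naturals, as an `Option` (`none` if the set is empty). -/
noncomputable def nmin (S : Set ℕ) : Option ℕ := by
  classical exact if S.Nonempty then some (sInf S) else none

/-- The recursive sequence of elements of the Cohen real `coh(X, I, x)`, defined for as
long as the minima exist: `x₀ = min {k ∈ X : x k = 1}`, and `x_{n+1}` is the least
`k ∈ X` with `x k = 1` such that whenever `k ∈ Iᵢ` and `xₙ ∈ Iⱼ`, then `j + 1 < i`. -/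
noncomputable def cohSeq (X : Set ℕ) (I : ℕ → Set ℕ) (x : ℕ → Bool) : ℕ → Option ℕ
  | 0 => nmin {k | k ∈ X ∧ x k = true}
  | n + 1 =>
    match cohSeq X I x n with
    | none => none
    | some p => nmin {k | k ∈ X ∧ x k = true ∧ ∀ i j, k ∈ I i → p ∈ I j → j + 1 < i}

/-- The Cohen real coded by `x` and associated to `X` and `I`: the set of values of the
(partial) recursive sequence `cohSeq`. -/
noncomputable def coh (X : Set ℕ) (I : ℕ → Set ℕ) (x : ℕ → Bool) : Set ℕ :=
  {k | ∃ n, cohSeq X I x n = some k}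

/-- The set `D(X₁,…,Xₙ; I₁,…,Iₙ; m) ⊆ 2^{<ω}` of conditions forcing
`|coh(X₁,I₁,x) ∩ … ∩ coh(Xₙ,Iₙ,x)| ≥ m`. -/
noncomputable def Dset {n : ℕ} (X : Fin n → Set ℕ) (I : Fin n → ℕ → Set ℕ) (m : ℕ) :
    Set (List Bool) :=
  {s | ∀ x : ℕ → Bool, ExtendsSeq x s →
    ∃ T : Finset ℕ, m ≤ T.card ∧ ↑T ⊆ ⋂ i, coh (X i) (I i) x}

namespace Stmt17Aux

/-- The index of the interval containing `k`. -/
noncomputable def idx (I : ℕ → Set ℕ) (k : ℕ) : ℕ := sInf {n | k ∈ I n}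

variable {I : ℕ → Set ℕ}

lemma mem_idx (hI : IntervalPartition I) (k : ℕ) : k ∈ I (idx I k) := by
  have : k ∈ ⋃ n, I n := hI.cover ▸ Set.mem_univ k
  obtain ⟨n, hn⟩ := Set.mem_iUnion.mp this
  exact Nat.sInf_mem (⟨n, hn⟩ : {n | k ∈ I n}.Nonempty)

lemma idx_eq (hI : IntervalPartition I) {k j : ℕ} (h : k ∈ I j) : idx I k = j := by
  by_contra hne
  exact Set.disjoint_left.mp (hI.disj _ _ hne) (mem_idx hI k) h

lemma lt_of_interval_lt (hI : IntervalPartition I) {i j : ℕ} (hij : i < j) :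
    ∀ a ∈ I i, ∀ b ∈ I j, a < b := by
  induction j, hij using Nat.le_induction with
  | base => exact fun a ha b hb => hI.consec i a ha b hb
  | succ j _ ih =>
    intro a ha b hb
    obtain ⟨c, hc⟩ := hI.nonempty j
    exact (ih a ha c hc).trans (hI.consec j c hc b hb)

lemma idx_mono (hI : IntervalPartition I) {a b : ℕ} (h : a ≤ b) : idx I a ≤ idx I b := by
  by_contra hlt
  push_neg at hlt
  exact absurd (lt_of_interval_lt hI hlt _ (mem_idx hI b) _ (mem_idx hI a)) (by omega)

lemma gap_iff (hI : IntervalPartition I) {k p : ℕ} :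
    (∀ i j, k ∈ I i → p ∈ I j → j + 1 < i) ↔ idx I p + 1 < idx I k := by
  constructor
  · intro h; exact h _ _ (mem_idx hI k) (mem_idx hI p)
  · intro h i j hk hp
    have h1 := idx_eq hI hk
    have h2 := idx_eq hI hp
    omega

lemma exists_bound (hI : IntervalPartition I) (N : ℕ) :
    ∃ B, ∀ k, B < k → N < idx I k := by
  have hfin : (⋃ j ∈ Finset.range (N + 1), I j).Finite :=
    Set.Finite.biUnion (Finset.range (N + 1)).finite_toSet fun j _ => hI.fin j
  obtain ⟨B, hB⟩ := hfin.bddAbove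
  refine ⟨B, fun k hk => ?_⟩
  by_contra h
  push_neg at h
  have hkm : k ∈ ⋃ j ∈ Finset.range (N + 1), I j := by
    refine Set.mem_biUnion ?_ (mem_idx hI k)
    exact Finset.mem_range.mpr (by omega)
  exact absurd (hB hkm) (by omega)

lemma nmin_eq_some {S : Set ℕ} (hS : S.Nonempty) : nmin S = some (sInf S) := by
  simp [nmin, hS]

lemma nmin_some_mem {S : Set ℕ} {p : ℕ} (h : nmin S = some p) : p ∈ S := by
  by_cases hS : S.Nonempty
  · rw [nmin_eq_some hS] at h
    injection h with h
    subst h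
    exact Nat.sInf_mem hS
  · simp [nmin, hS] at h

/-- The padded extension: `t`, then `r` zeros, then a one. -/
def pad (t : List Bool) (r : ℕ) : List Bool := (t ++ List.replicate r false) ++ [true]

lemma pad_length (t : List Bool) (r : ℕ) : (pad t r).length = t.length + r + 1 := by
  simp [pad]; omega

lemma pad_get_lt (t : List Bool) (r : ℕ) {i : ℕ} (hi : i < t.length)
    (h : i < (pad t r).length) : (pad t r)[i] = t[i] := by
  unfold pad at h ⊢
  rw [List.getElem_append_left (by simp; omega), List.getElem_append_left hi]

lemma pad_get_last (t : List Bool) (r : ℕ) (h : t.length + r < (pad t r).length) :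
    (pad t r)[t.length + r] = true := by
  unfold pad at h ⊢
  rw [List.getElem_append_right (by simp)]
  simp

lemma pad_get_mid (t : List Bool) (r : ℕ) {i : ℕ} (h1 : t.length ≤ i) (h2 : i < t.length + r)
    (h : i < (pad t r).length) : (pad t r)[i] = false := by
  unfold pad at h ⊢
  rw [List.getElem_append_left (by simp; omega), List.getElem_append_right (by omega)]
  simp

lemma cohSeq_mem {X : Set ℕ} {x : ℕ → Bool} {p n : ℕ}
    (h : cohSeq X I x n = some p) : p ∈ X ∧ x p = true := by
  cases n with
  | zero =>
    have := nmin_some_mem h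
    exact ⟨this.1, this.2⟩
  | succ n =>
    unfold cohSeq at h
    cases hq : cohSeq X I x n with
    | none => rw [hq] at h; cases h
    | some q =>
      rw [hq] at h
      have := nmin_some_mem h
      exact ⟨this.1, this.2.1⟩

/-- Core lemma: if `k ∈ X`, `x k = 1`, and every `1`-bit of `x` below `k` lies in an
interval of index at least two below that of `k`, then `k` is a value of `cohSeq`. -/
lemma mem_coh (hI : IntervalPartition I) {X : Set ℕ} {x : ℕ → Bool} {k : ℕ}
    (hkX : k ∈ X) (hkx : x k = true)
    (hgap : ∀ p < k, x p = true → idx I p + 1 < idx I k) :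
    k ∈ coh X I x := by
  have key : ∀ n, (∃ j, cohSeq X I x j = some k) ∨
      (∃ p, cohSeq X I x n = some p ∧ n ≤ p ∧ p < k) := by
    intro n
    induction n with
    | zero =>
      have hS : ({q | q ∈ X ∧ x q = true} : Set ℕ).Nonempty := ⟨k, hkX, hkx⟩
      have h0 : cohSeq X I x 0 = some (sInf {q | q ∈ X ∧ x q = true}) := nmin_eq_some hS
      have hpk : sInf {q | q ∈ X ∧ x q = true} ≤ k := Nat.sInf_le ⟨hkX, hkx⟩
      rcases eq_or_lt_of_le hpk with h | h
      · exact Or.inl ⟨0, by rw [h0, h]⟩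
      · exact Or.inr ⟨_, h0, Nat.zero_le _, h⟩
    | succ n ih =>
      rcases ih with h | ⟨p, hp, hnp, hpk⟩
      · exact Or.inl h
      have hpmem := cohSeq_mem hp
      have hgapk : ∀ i j, k ∈ I i → p ∈ I j → j + 1 < i :=
        (gap_iff hI).mpr (hgap p hpk hpmem.2)
      have hkS : k ∈ {q | q ∈ X ∧ x q = true ∧ ∀ i j, q ∈ I i → p ∈ I j → j + 1 < i} :=
        ⟨hkX, hkx, hgapk⟩
      have heq : cohSeq X I x (n + 1) =
          some (sInf {q | q ∈ X ∧ x q = true ∧ ∀ i j, q ∈ I i → p ∈ I j → j + 1 < i}) := by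
        unfold cohSeq
        rw [hp]
        exact nmin_eq_some ⟨k, hkS⟩
      set q := sInf {q | q ∈ X ∧ x q = true ∧ ∀ i j, q ∈ I i → p ∈ I j → j + 1 < i} with hq
      have hqS : q ∈ {q | q ∈ X ∧ x q = true ∧ ∀ i j, q ∈ I i → p ∈ I j → j + 1 < i} :=
        Nat.sInf_mem ⟨k, hkS⟩
      have hqk : q ≤ k := Nat.sInf_le hkS
      have hpq : p < q := by
        have hidx := (gap_iff hI).mp hqS.2.2
        exact lt_of_interval_lt hI (by omega) _ (mem_idx hI p) _ (mem_idx hI q)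
      rcases eq_or_lt_of_le hqk with h | h
      · exact Or.inl ⟨n + 1, by rw [heq, h]⟩
      · exact Or.inr ⟨q, heq, by omega, h⟩
  rcases key k with h | ⟨p, _, hkp, hpk⟩
  · exact h
  · omega

end Stmt17Aux

open Stmt17Aux in
/-- if `X₁ ∩ … ∩ Xₙ` is infinite and `I₁,…,Iₙ` are partitions of `ω` into
consecutive finite intervals, then for every `m` the set `D(X₁,…,Xₙ; I₁,…,Iₙ; m)` is
dense in `(2^{<ω}, ⊇)`: every finite binary sequence has an extension in it. -/
theorem stmt17 (n m : ℕ) (X : Fin n → Set ℕ) (hX : (⋂ i, X i).Infinite)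
    (I : Fin n → ℕ → Set ℕ) (hI : ∀ i, IntervalPartition (I i)) :
    ∀ s : List Bool, ∃ t ∈ Dset X I m, s <+: t := by
  intro s
  suffices h : ∃ t, s <+: t ∧ ∃ K : Finset ℕ, K.card = m ∧ (∀ k ∈ K, k < t.length) ∧
      ∀ x, ExtendsSeq x t → ↑K ⊆ ⋂ i, coh (X i) (I i) x by
    obtain ⟨t, hst, K, hKcard, _, hKcoh⟩ := h
    exact ⟨t, fun x hx => ⟨K, hKcard.ge, hKcoh x hx⟩, hst⟩
  induction m with
  | zero => exact ⟨s, List.prefix_refl s, ∅, rfl, by simp, by simp⟩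
  | succ m ih =>
    obtain ⟨t, hst, K, hKcard, hKlt, hKcoh⟩ := ih
    choose B hB using fun i => exists_bound (hI i) (idx (I i) t.length + 1)
    obtain ⟨k, hkX, hk⟩ := hX.exists_gt (max t.length (Finset.univ.sup B))
    have hkt : t.length < k := (le_max_left _ _).trans_lt hk
    have hidx : ∀ i, idx (I i) t.length + 1 < idx (I i) k := fun i =>
      hB i k (((Finset.le_sup (Finset.mem_univ i)).trans (le_max_right _ _)).trans_lt hk)
    obtain ⟨r, hr⟩ : ∃ r, k = t.length + r := ⟨k - t.length, by omega⟩
    have hlen : (pad t r).length = k + 1 := by rw [pad_length]; omega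
    have hext : ∀ x : ℕ → Bool, ExtendsSeq x (pad t r) → ExtendsSeq x t := by
      intro x hx i hi
      have hi' : i < (pad t r).length := by omega
      rw [hx i hi', pad_get_lt t r hi]
    have hxk : ∀ x : ℕ → Bool, ExtendsSeq x (pad t r) → x k = true := by
      intro x hx
      have hk' : k < (pad t r).length := by omega
      have := hx k hk'
      rw [this]
      have : k = t.length + r := hr
      subst this
      exact pad_get_last t r hk'
    have hzero : ∀ x : ℕ → Bool, ExtendsSeq x (pad t r) → ∀ p < k, x p = true → p < t.length := by
      intro x hx p hp hxp
      by_contra hge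
      push_neg at hge
      have hp' : p < (pad t r).length := by omega
      have := hx p hp'
      rw [pad_get_mid t r hge (by omega) hp'] at this
      rw [hxp] at this
      cases this
    refine ⟨pad t r, hst.trans ((List.prefix_append _ _).trans (List.prefix_append _ _)),
      insert k K, ?_, ?_, ?_⟩
    · rw [Finset.card_insert_of_notMem (fun hkK => absurd (hKlt k hkK) (by omega)), hKcard]
    · intro j hj
      rcases Finset.mem_insert.mp hj with rfl | hj
      · omega
      · have := hKlt j hj; omega
    · intro x hx
      intro j hj
      rcases Finset.mem_insert.mp (by exact_mod_cast hj) with rfl | hjK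
      · refine Set.mem_iInter.mpr fun i => ?_
        refine mem_coh (hI i) (Set.mem_iInter.mp hkX i) (hxk x hx) ?_
        intro p hp hxp
        have hplt := hzero x hx p hp hxp
        have h1 : idx (I i) p ≤ idx (I i) t.length := idx_mono (hI i) (by omega)
        have h2 := hidx i
        omega
      · exact hKcoh x (hext x hx) hjK
end

section
/- Let 𝒟 be the set of all dense subsets of the partial order (2^{<ω}, ⊇), and let E ⊆ 2^ω × 𝒟 be given by x E D iff {x↾n : n < ω} ∩ D = ∅; define cov(ℳ) as the evaluation of ⟨2^ω, 𝒟, E⟩. Fix functions cd : 𝒟 → 𝔓(ω) and dcd : 𝔓(ω) → 𝒟 with cd ∘ dcd = id, a fixed dense set D* ∈ 𝒟, and a function inpa : 𝔓(ω) → ℐ (ℐ the set of partitions of ω into consecutive finite intervals) such that for infinite X with increasing enumeration ⟨xₙ⟩, inpa(X) = {[0,x₀]} ∪ {(xₙ, x_{n+1}] : n < ω}. Define operations on 𝒟: F_c(D) = dcd(ω ∖ cd(D)); F_i(D,D') = dcd(cd(D) ∩ cd(D')); F_r(D,D',D'') = dcd(coh(cd(D), inpa(cd(D')), χ_{cd(D'')}));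 and for each n, m < ω, F_d^{n,m}(D₁,…,D_{2n}) = D(cd(D₁),…,cd(Dₙ); inpa(cd(D_{n+1})),…,inpa(cd(D_{2n})); m) when cd(D₁) ∩ … ∩ cd(Dₙ) is infinite, and D* otherwise. Let ℱ_{Q-pt} = {F_c, F_i, F_r} ∪ {F_d^{n,m} : n, m < ω}. If κ is a regular cardinal and there exists a ⟨⟨2^ω, 𝒟, E⟩, ℱ_{Q-pt}, κ⟩-pathway, then there exists a nonprincipal ultrafilter u on ω such that for every partition {Iₙ : n < ω} of ω into consecutive finite intervals there is Y ∈ u with |Y ∩ Iₙ| ≤ 1 for all n (a Q-point). -/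
open Cardinal Set

/-- A subset `S` is closed under a finitary operation `F` (presented as a pair of an
arity `n` and a function `(Fin n → B) → B`). -/
def ClosedUnderOp {B : Type*} (S : Set B) (F : Σ n : ℕ, (Fin n → B) → B) : Prop :=
  ∀ v : Fin F.1 → B, (∀ i, v i ∈ S) → F.2 v ∈ S

/-- `IsPathway E 𝓕 δ seq` says that `⟨seq α : α < δ⟩` is a
`⟨⟨A,B,E⟩, 𝓕, δ⟩`-pathway: an increasing continuous sequence of subsets of `B`
whose union is all of `B`, such that no `seq α` is `E`-dominating, and with each
`seq α` closed under every operation in `𝓕`. -/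
structure IsPathway {A B : Type*} (E : A → B → Prop)
    (𝓕 : Set (Σ n : ℕ, (Fin n → B) → B)) (δ : Ordinal)
    (seq : Ordinal → Set B) : Prop where
  mono : ∀ α β : Ordinal, α ≤ β → β < δ → seq α ⊆ seq β
  cont : ∀ γ : Ordinal, γ < δ → Order.IsSuccLimit γ → seq γ = ⋃ α : Ordinal, ⋃ _ : α < γ, seq α
  total : (⋃ α : Ordinal, ⋃ _ : α < δ, seq α) = Set.univ
  avoid : ∀ α : Ordinal, α < δ → ∃ x : A, ∀ y ∈ seq α, ¬ E x y
  closedF : ∀ α : Ordinal, α < δ → ∀ F ∈ 𝓕, ClosedUnderOp (seq α) F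

/-- The evaluation of the triple `⟨A, B, E⟩`: the least cardinality of an `E`-dominating
family `X ⊆ B`, i.e. of an `X` such that every `a ∈ A` is `E`-related to some `b ∈ X`. -/
noncomputable def evalTriple {A B : Type u} (E : A → B → Prop) : Cardinal.{u} :=
  sInf {c | ∃ X : Set B, #X = c ∧ ∀ a : A, ∃ b ∈ X, E a b}

/-- A subset of `2^{<ω}` is dense (in the partial order of reverse inclusion) if every
finite binary sequence has an extension in it. -/
def IsDenseCond (D : Set (List Bool)) : Prop := ∀ s : List Bool, ∃ t ∈ D, s <+: t

/-- The set `𝒟` of all dense subsets of `(2^{<ω}, ⊇)`. -/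
def DenseSet : Type := {D : Set (List Bool) // IsDenseCond D}

/-- The relation `E ⊆ 2^ω × 𝒟` of `cov(ℳ)`: `x E D` iff no initial segment of `x`
belongs to `D`. -/
def covME (x : ℕ → Bool) (D : DenseSet) : Prop :=
  ∀ n : ℕ, List.ofFn (fun i : Fin n => x i) ∉ D.1

/-- The characteristic function of `Z ⊆ ω`, viewed as an element of `2^ω`. -/
noncomputable def chi (Z : Set ℕ) : ℕ → Bool := by
  classical exact fun k => decide (k ∈ Z)

open Classical in
/-- The `2n`-ary operation `F_d^{n,m}` on `𝒟`: it returns the dense set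
`D(cd D₁,…,cd Dₙ; inpa (cd D_{n+1}),…, inpa (cd D_{2n}); m)` when
`cd D₁ ∩ … ∩ cd Dₙ` is infinite (and that set is indeed dense), and the fixed dense set
`D*` otherwise. -/
noncomputable def Fd (cd : DenseSet → Set ℕ) (inpa : Set ℕ → ℕ → Set ℕ)
    (Dstar : DenseSet) (n m : ℕ) (v : Fin (n + n) → DenseSet) : DenseSet :=
  if h : (⋂ i : Fin n, cd (v (Fin.castAdd n i))).Infinite ∧
      IsDenseCond (Dset (fun i : Fin n => cd (v (Fin.castAdd n i)))
        (fun i : Fin n => inpa (cd (v (Fin.natAdd n i)))) m) then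
    ⟨Dset (fun i : Fin n => cd (v (Fin.castAdd n i)))
      (fun i : Fin n => inpa (cd (v (Fin.natAdd n i)))) m, h.2⟩
  else Dstar

/-- The family `ℱ_{Q-pt} = {F_c, F_i, F_r} ∪ {F_d^{n,m} : n, m < ω}` of finitary
operations on `𝒟`. -/
noncomputable def QPtOps (cd : DenseSet → Set ℕ) (dcd : Set ℕ → DenseSet)
    (inpa : Set ℕ → ℕ → Set ℕ) (Dstar : DenseSet) :
    Set (Σ k : ℕ, (Fin k → DenseSet) → DenseSet) :=
  {⟨1, fun v => dcd (cd (v 0))ᶜ⟩,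
   ⟨2, fun v => dcd (cd (v 0) ∩ cd (v 1))⟩,
   ⟨3, fun v => dcd (coh (cd (v 0)) (inpa (cd (v 1))) (chi (cd (v 2))))⟩} ∪
  {F | ∃ n m : ℕ, F = ⟨n + n, Fd cd inpa Dstar n m⟩}

section Aux

theorem IntervalPartition.lt_blocks {I : ℕ → Set ℕ} (hI : IntervalPartition I) :
    ∀ {a b : ℕ}, a < b → ∀ p ∈ I a, ∀ q ∈ I b, p < q := by
  intro a b
  induction b with
  | zero => omega
  | succ b ih =>
    intro hab p hp q hq
    rcases Nat.lt_or_ge a b with h | h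
    · obtain ⟨r, hr⟩ := hI.nonempty b
      exact (ih h p hp r hr).trans (hI.consec b r hr q hq)
    · have : a = b := by omega
      subst this
      exact hI.consec a p hp q hq

theorem IntervalPartition.exists_block {I : ℕ → Set ℕ} (hI : IntervalPartition I) (k : ℕ) :
    ∃ a, k ∈ I a := by
  have := hI.cover
  have hk : k ∈ ⋃ n, I n := by rw [this]; trivial
  simpa using hk

theorem IntervalPartition.block_unique {I : ℕ → Set ℕ} (hI : IntervalPartition I) {k a b : ℕ}
    (ha : k ∈ I a) (hb : k ∈ I b) : a = b := by
  by_contra h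
  exact (hI.disj a b h).ne_of_mem ha hb rfl

theorem IntervalPartition.far {I : ℕ → Set ℕ} (hI : IntervalPartition I) (B : ℕ) :
    ∃ N : ℕ, ∀ k ≥ N, ∀ q ≤ B, ∀ a b, k ∈ I a → q ∈ I b → b + 1 < a := by
  classical
  choose blk hblk using hI.exists_block
  set b' : ℕ := (Finset.range (B + 1)).sup blk with hb'
  have hU : (⋃ a ∈ Finset.range (b' + 2), I a).Finite :=
    Set.Finite.biUnion (Finset.range (b' + 2)).finite_toSet (fun a _ => hI.fin a)
  obtain ⟨c, hc⟩ := hU.bddAbove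
  refine ⟨c + 1, fun k hk q hq a b hka hqb => ?_⟩
  by_contra hab
  push_neg at hab
  have hqblk : b = blk q := hI.block_unique hqb (hblk q)
  have hble : blk q ≤ b' := Finset.le_sup (Finset.mem_range.mpr (by omega))
  have hmem : k ∈ ⋃ a ∈ Finset.range (b' + 2), I a := by
    refine Set.mem_biUnion (Finset.mem_range.mpr ?_) hka
    omega
  have := hc hmem
  omega

theorem nmin_eq_some_iff {S : Set ℕ} {p : ℕ} :
    nmin S = some p ↔ p ∈ S ∧ ∀ k ∈ S, p ≤ k := by
  classical
  unfold nmin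
  split_ifs with h
  · simp only [Option.some.injEq]
    constructor
    · rintro rfl
      exact ⟨Nat.sInf_mem h, fun k hk => Nat.sInf_le hk⟩
    · rintro ⟨hp, hlb⟩
      exact le_antisymm (Nat.sInf_le hp) (le_csInf h hlb)
  · simp only [false_iff, not_and]
    intro hp
    exact absurd ⟨p, hp⟩ h

theorem nmin_eq_some_of_nonempty {S : Set ℕ} (h : S.Nonempty) : nmin S = some (sInf S) := by
  classical
  unfold nmin
  rw [if_pos h]

theorem cohSeq_succ {X : Set ℕ} {I : ℕ → Set ℕ} {x : ℕ → Bool} {n p : ℕ}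
    (h : cohSeq X I x n = some p) :
    cohSeq X I x (n + 1) =
      nmin {k | k ∈ X ∧ x k = true ∧ ∀ i j, k ∈ I i → p ∈ I j → j + 1 < i} := by
  rw [cohSeq, h]

theorem cohSeq_pred {X : Set ℕ} {I : ℕ → Set ℕ} {x : ℕ → Bool} {n q : ℕ}
    (h : cohSeq X I x (n + 1) = some q) : ∃ p, cohSeq X I x n = some p := by
  rw [cohSeq] at h
  rcases hn : cohSeq X I x n with _ | p
  · rw [hn] at h; simp at h
  · exact ⟨p, rfl⟩

theorem cohSeq_blocks {X : Set ℕ} {I : ℕ → Set ℕ} (hI : IntervalPartition I) {x : ℕ → Bool} :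
    ∀ (k n p q : ℕ), cohSeq X I x n = some p → cohSeq X I x (n + k + 1) = some q →
      ∀ a b, q ∈ I a → p ∈ I b → b + 1 < a := by
  intro k
  induction k with
  | zero =>
    intro n p q hp hq a b hqa hpb
    rw [cohSeq_succ hp] at hq
    exact ((nmin_eq_some_iff.mp hq).1).2.2 a b hqa hpb
  | succ k ih =>
    intro n p q hp hq a b hqa hpb
    have hq' : cohSeq X I x ((n + k + 1) + 1) = some q := by
      rw [show (n + k + 1) + 1 = n + (k + 1) + 1 by ring]; exact hq
    obtain ⟨r, hr⟩ := cohSeq_pred hq'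
    obtain ⟨c, hrc⟩ := hI.exists_block r
    have h1 : b + 1 < c := ih n p r hp hr c b hrc hpb
    have h2 : c + 1 < a := by
      rw [cohSeq_succ hr] at hq'
      exact ((nmin_eq_some_iff.mp hq').1).2.2 a c hqa hrc
    omega

theorem coh_selector {X : Set ℕ} {I : ℕ → Set ℕ} (hI : IntervalPartition I) (x : ℕ → Bool)
    (n : ℕ) : (coh X I x ∩ I n).Subsingleton := by
  rintro p ⟨⟨m₁, hm₁⟩, hpn⟩ q ⟨⟨m₂, hm₂⟩, hqn⟩
  have key : ∀ m m' p' q', m < m' → cohSeq X I x m = some p' → cohSeq X I x m' = some q' →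
      p' ∈ I n → q' ∈ I n → False := by
    intro m m' p' q' hlt h1 h2 hp' hq'
    obtain ⟨k, rfl⟩ : ∃ k, m' = m + k + 1 := ⟨m' - m - 1, by omega⟩
    have := cohSeq_blocks hI k m p' q' h1 h2 n n hq' hp'
    omega
  rcases lt_trichotomy m₁ m₂ with h | h | h
  · exact absurd (key m₁ m₂ p q h hm₁ hm₂ hpn hqn) (by simp)
  · subst h; rw [hm₁] at hm₂; exact Option.some_injective _ hm₂
  · exact absurd (key m₂ m₁ q p h hm₂ hm₁ hqn hpn) (by simp)

end Aux

section Density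

theorem far_all {n : ℕ} (I : Fin n → ℕ → Set ℕ) (hI : ∀ i, IntervalPartition (I i)) (B : ℕ) :
    ∃ N : ℕ, ∀ k ≥ N, ∀ i, ∀ q ≤ B, ∀ a b, k ∈ I i a → q ∈ I i b → b + 1 < a := by
  choose N hN using fun i => (hI i).far B
  exact ⟨Finset.univ.sup N, fun k hk i =>
    hN i k (le_trans (Finset.le_sup (Finset.mem_univ i)) hk)⟩

theorem dset_dense {n : ℕ} (X : Fin n → Set ℕ) (I : Fin n → ℕ → Set ℕ)
    (hI : ∀ i, IntervalPartition (I i)) (hZ : (⋂ i, X i).Infinite) (m : ℕ) :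
    IsDenseCond (Dset X I m) := by
  classical
  intro s
  rcases Nat.eq_zero_or_pos m with rfl | hm
  · refine ⟨s, ?_, List.prefix_refl s⟩
    intro x _
    exact ⟨∅, by simp⟩
  obtain ⟨M, rfl⟩ : ∃ M, m = M + 1 := ⟨m - 1, by omega⟩
  -- step function producing far-away elements of Z
  have step : ∀ B : ℕ, ∃ k, k ∈ (⋂ i, X i) ∧ B < k ∧
      ∀ i, ∀ q ≤ B, ∀ a b, k ∈ I i a → q ∈ I i b → b + 1 < a := by
    intro B
    obtain ⟨N, hN⟩ := far_all I hI B
    obtain ⟨k, hkZ, hk⟩ := hZ.exists_gt (max N B)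
    exact ⟨k, hkZ, by omega, fun i q hq => hN k (by omega) i q hq⟩
  choose f hfZ hfgt hffar using step
  set pick : ℕ → ℕ := fun j => Nat.rec (f s.length) (fun _ prev => f prev) j with hpickdef
  have picksucc : ∀ j, pick (j + 1) = f (pick j) := fun j => rfl
  have pickZ : ∀ j, pick j ∈ ⋂ i, X i := by
    intro j; cases j with
    | zero => exact hfZ s.length
    | succ j => rw [picksucc]; exact hfZ _
  have pickmono : StrictMono pick := by
    apply strictMono_nat_of_lt_succ
    intro j; rw [picksucc]; exact hfgt _
  have pickgt : s.length < pick 0 := hfgt _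
  have pickfar0 : ∀ i, ∀ q ≤ s.length, ∀ a b, pick 0 ∈ I i a → q ∈ I i b → b + 1 < a :=
    fun i => hffar s.length i
  have pickfarsucc : ∀ j, ∀ i, ∀ q ≤ pick j, ∀ a b, pick (j+1) ∈ I i a → q ∈ I i b → b + 1 < a :=
    fun j i => by rw [picksucc]; exact hffar (pick j) i
  have h0M : pick 0 ≤ pick M := pickmono.monotone (Nat.zero_le M)
  -- the extension t
  set L : ℕ := pick M + 1 - s.length with hL
  set g : Fin L → Bool := fun r => decide (∃ j, j ≤ M ∧ s.length + (r : ℕ) = pick j) with hg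
  set t : List Bool := s ++ List.ofFn g with ht
  have hsM : s.length < pick M := lt_of_lt_of_le pickgt h0M
  have htlen : t.length = pick M + 1 := by
    rw [ht, List.length_append, List.length_ofFn]; omega
  refine ⟨t, ?_, ⟨List.ofFn g, rfl⟩⟩
  intro x hx
  -- characterization of x on [s.length, pick M]
  have hx1 : ∀ k, s.length ≤ k → k ≤ pick M → (x k = true ↔ ∃ j, j ≤ M ∧ k = pick j) := by
    intro k hk1 hk2
    have hkt : k < t.length := by omega
    have hxk : x k = t[k] := hx k hkt
    have hkL : k - s.length < L := by omega
    have h2 : t[k]'hkt = (List.ofFn g)[k - s.length]'(by simpa using hkL) :=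
      List.getElem_append_right hk1
    have h3 : (List.ofFn g)[k - s.length]'(by simpa using hkL) = g ⟨k - s.length, hkL⟩ := by simp
    rw [hxk, h2, h3, hg]
    simp only [decide_eq_true_eq]
    constructor
    · rintro ⟨j, hj, hjk⟩; exact ⟨j, hj, by omega⟩
    · rintro ⟨j, hj, hjk⟩; exact ⟨j, hj, by omega⟩
  -- far implies greater
  have flt : ∀ (i : Fin n) (k q : ℕ), (∀ a b, k ∈ I i a → q ∈ I i b → b + 1 < a) → q < k := by
    intro i k q hf
    obtain ⟨a, ha⟩ := (hI i).exists_block k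
    obtain ⟨b, hb⟩ := (hI i).exists_block q
    exact (hI i).lt_blocks (by have := hf a b ha hb; omega) q hb k ha
  -- each pick j is attained by each cohSeq
  have main : ∀ (i : Fin n) (j : ℕ), j ≤ M → ∃ nn, cohSeq (X i) (I i) x nn = some (pick j) := by
    intro i j
    induction j with
    | zero =>
      intro _
      have hxp0 : x (pick 0) = true :=
        (hx1 (pick 0) (le_of_lt pickgt) h0M).mpr ⟨0, Nat.zero_le M, rfl⟩
      -- crawl through the s-region
      have crawl : ∀ d p nn, cohSeq (X i) (I i) x nn = some p → p < s.length →
          s.length - p ≤ d → ∃ n', cohSeq (X i) (I i) x n' = some (pick 0) := by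
        intro d
        induction d with
        | zero => intro p nn _ h1 h2; omega
        | succ d ih =>
          intro p nn hp h1 _
          set S' : Set ℕ :=
            {k | k ∈ X i ∧ x k = true ∧ ∀ a b, k ∈ I i a → p ∈ I i b → b + 1 < a} with hS'
          have hp0mem : pick 0 ∈ S' :=
            ⟨Set.mem_iInter.mp (pickZ 0) i, hxp0, fun a b => pickfar0 i p (by omega) a b⟩
          have hne : S'.Nonempty := ⟨_, hp0mem⟩
          have hsucc : cohSeq (X i) (I i) x (nn+1) = some (sInf S') := by
            rw [cohSeq_succ hp]; exact nmin_eq_some_of_nonempty hne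
          have hp'S : sInf S' ∈ S' := Nat.sInf_mem hne
          have hp'le : sInf S' ≤ pick 0 := Nat.sInf_le hp0mem
          have hpp' : p < sInf S' := flt i (sInf S') p (fun a b => hp'S.2.2 a b)
          rcases eq_or_lt_of_le hp'le with he | hlt
          · exact ⟨nn+1, by rw [hsucc, he]⟩
          · have h2 : sInf S' < s.length := by
              by_contra hge
              push_neg at hge
              obtain ⟨j', _, hj'⟩ := (hx1 (sInf S') hge (by omega)).mp hp'S.2.1
              have : pick 0 ≤ pick j' := pickmono.monotone (Nat.zero_le j')
              omega
            exact ih (sInf S') (nn+1) hsucc h2 (by omega)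
      -- initial step
      set S0 : Set ℕ := {k | k ∈ X i ∧ x k = true} with hS0
      have h0mem : pick 0 ∈ S0 := ⟨Set.mem_iInter.mp (pickZ 0) i, hxp0⟩
      have hne : S0.Nonempty := ⟨_, h0mem⟩
      have h0 : cohSeq (X i) (I i) x 0 = some (sInf S0) := by
        rw [cohSeq]; exact nmin_eq_some_of_nonempty hne
      have hc : sInf S0 ∈ S0 := Nat.sInf_mem hne
      have hcle : sInf S0 ≤ pick 0 := Nat.sInf_le h0mem
      rcases eq_or_lt_of_le hcle with he | hlt
      · exact ⟨0, by rw [h0, he]⟩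
      · have h2 : sInf S0 < s.length := by
          by_contra hge
          push_neg at hge
          obtain ⟨j', _, hj'⟩ := (hx1 (sInf S0) hge (by omega)).mp hc.2
          have : pick 0 ≤ pick j' := pickmono.monotone (Nat.zero_le j')
          omega
        exact crawl s.length (sInf S0) 0 h0 h2 (by omega)
    | succ j ihj =>
      intro hj
      obtain ⟨nn, hnn⟩ := ihj (by omega)
      have hjM : pick (j+1) ≤ pick M := pickmono.monotone hj
      have hj0 : pick 0 ≤ pick j := pickmono.monotone (Nat.zero_le j)
      have hjj : pick j < pick (j+1) := pickmono (Nat.lt_succ_self j)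
      set S' : Set ℕ :=
        {k | k ∈ X i ∧ x k = true ∧ ∀ a b, k ∈ I i a → pick j ∈ I i b → b + 1 < a} with hS'
      have hmem : pick (j+1) ∈ S' :=
        ⟨Set.mem_iInter.mp (pickZ (j+1)) i,
         (hx1 (pick (j+1)) (by omega) hjM).mpr ⟨j+1, hj, rfl⟩,
         fun a b => pickfarsucc j i (pick j) le_rfl a b⟩
      have hne : S'.Nonempty := ⟨_, hmem⟩
      have hsucc : cohSeq (X i) (I i) x (nn+1) = some (sInf S') := by
        rw [cohSeq_succ hnn]; exact nmin_eq_some_of_nonempty hne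
      have hp'S : sInf S' ∈ S' := Nat.sInf_mem hne
      have hp'le : sInf S' ≤ pick (j+1) := Nat.sInf_le hmem
      have hgt : pick j < sInf S' := flt i (sInf S') (pick j) (fun a b => hp'S.2.2 a b)
      have ha : s.length ≤ sInf S' := by omega
      have hb : sInf S' ≤ pick M := by omega
      obtain ⟨j', hj', hpj'⟩ := (hx1 (sInf S') ha hb).mp hp'S.2.1
      have hjj' : j < j' := by
        have := pickmono.lt_iff_lt (a := j) (b := j')
        omega
      have hj1le : j + 1 ≤ j' := by omega
      have : pick (j+1) ≤ pick j' := pickmono.monotone hj1le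
      have heq : sInf S' = pick (j+1) := by omega
      exact ⟨nn+1, by rw [hsucc, heq]⟩
  refine ⟨Finset.image pick (Finset.range (M+1)), ?_, ?_⟩
  · rw [Finset.card_image_of_injective _ pickmono.injective, Finset.card_range]
  · intro k hk
    simp only [Finset.coe_image, Finset.coe_range, Set.mem_image, Set.mem_Iio] at hk
    obtain ⟨j, hj, rfl⟩ := hk
    exact Set.mem_iInter.mpr fun i => main i j (by omega)

end Density

section Endpoints

theorem IntervalPartition.endpoints {I : ℕ → Set ℕ} (hI : IntervalPartition I) :
    ∃ e : ℕ → ℕ, StrictMono e ∧ I 0 = Set.Icc 0 (e 0) ∧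
      ∀ n, I (n + 1) = Set.Ioc (e n) (e (n + 1)) := by
  classical
  set e : ℕ → ℕ := fun n => (hI.fin n).toFinset.max'
    (by rw [Set.Finite.toFinset_nonempty]; exact hI.nonempty n) with he
  have hmem : ∀ n, e n ∈ I n := by
    intro n
    have := (hI.fin n).toFinset.max'_mem
      (by rw [Set.Finite.toFinset_nonempty]; exact hI.nonempty n)
    rwa [Set.Finite.mem_toFinset] at this
  have hle : ∀ n, ∀ k ∈ I n, k ≤ e n := by
    intro n k hk
    exact (hI.fin n).toFinset.le_max' k ((hI.fin n).mem_toFinset.mpr hk)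
  have hmono : StrictMono e := by
    apply strictMono_nat_of_lt_succ
    intro n
    exact hI.consec n (e n) (hmem n) (e (n + 1)) (hmem (n + 1))
  refine ⟨e, hmono, ?_, ?_⟩
  · ext k
    simp only [Set.mem_Icc, Nat.zero_le, true_and]
    constructor
    · exact hle 0 k
    · intro hk
      obtain ⟨m, hm⟩ := hI.exists_block k
      rcases Nat.eq_zero_or_pos m with rfl | hmpos
      · exact hm
      · have := hI.lt_blocks hmpos (e 0) (hmem 0) k hm
        omega
  · intro n
    ext k
    simp only [Set.mem_Ioc]
    constructor
    · intro hk
      exact ⟨hI.consec n (e n) (hmem n) k hk, hle (n + 1) k hk⟩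
    · rintro ⟨h1, h2⟩
      obtain ⟨m, hm⟩ := hI.exists_block k
      rcases lt_trichotomy m (n + 1) with h | h | h
      · have : k ≤ e n := le_trans (hle m k hm) (hmono.monotone (by omega))
        omega
      · rwa [h] at hm
      · have := hI.lt_blocks h (e (n + 1)) (hmem (n + 1)) k hm
        omega

end Endpoints

theorem coh_subset (X : Set ℕ) (I : ℕ → Set ℕ) (x : ℕ → Bool) : coh X I x ⊆ X := by
  rintro k ⟨n, hn⟩
  cases n with
  | zero => rw [cohSeq] at hn; exact (nmin_eq_some_iff.mp hn).1.1
  | succ n =>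
    obtain ⟨p, hp⟩ := cohSeq_pred hn
    rw [cohSeq_succ hp] at hn
    exact (nmin_eq_some_iff.mp hn).1.1
/-- given coding functions `cd : 𝒟 → 𝔓(ω)`, `dcd : 𝔓(ω) → 𝒟` with
`cd ∘ dcd = id`, a fixed dense set `D*`, and `inpa : 𝔓(ω) → ℐ` as described, if `κ` is a
regular cardinal and there is a `⟨⟨2^ω, 𝒟, E⟩, ℱ_{Q-pt}, κ⟩`-pathway, then there is a
Q-point: a nonprincipal ultrafilter `u` on `ω` such that every partition of `ω` into
consecutive finite intervals admits a partial selector in `u`. -/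
theorem stmt18
    (cd : DenseSet → Set ℕ) (dcd : Set ℕ → DenseSet)
    (hid : ∀ Z : Set ℕ, cd (dcd Z) = Z)
    (Dstar : DenseSet)
    (inpa : Set ℕ → ℕ → Set ℕ)
    (hinpa : ∀ Z : Set ℕ, IntervalPartition (inpa Z))
    (hinpa' : ∀ Z : Set ℕ, Z.Infinite → ∀ e : ℕ → ℕ, StrictMono e → Set.range e = Z →
      inpa Z 0 = Set.Icc 0 (e 0) ∧ ∀ n, inpa Z (n + 1) = Set.Ioc (e n) (e (n + 1)))
    (κ : Cardinal) (hκ : κ.IsRegular)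
    (seq : Ordinal → Set DenseSet)
    (hpath : IsPathway covME (QPtOps cd dcd inpa Dstar) κ.ord seq) :
    ∃ u : Ultrafilter ℕ, (∀ a : ℕ, u ≠ pure a) ∧
      ∀ I : ℕ → Set ℕ, IntervalPartition I →
        ∃ Y ∈ u, ∀ n, (Y ∩ I n).Subsingleton := by
  classical
  set δ := κ.ord with hδdef
  have hδlim : Order.IsSuccLimit δ := Cardinal.isSuccLimit_ord hκ.aleph0_le
  set A : Ordinal → Set ℕ → Prop := fun α Z => ∃ D ∈ seq α, cd D = Z with hAdef
  have hAmono : ∀ {α β : Ordinal} {Z}, α ≤ β → β < δ → A α Z → A β Z := by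
    rintro α β Z hab hb ⟨D, hD, rfl⟩
    exact ⟨D, hpath.mono α β hab hb hD, rfl⟩
  have hAtotal : ∀ Z, ∃ α, α < δ ∧ A α Z := by
    intro Z
    have hmem : dcd Z ∈ ⋃ α : Ordinal, ⋃ _ : α < δ, seq α := by rw [hpath.total]; trivial
    simp only [Set.mem_iUnion] at hmem
    obtain ⟨α, hα, hmem⟩ := hmem
    exact ⟨α, hα, dcd Z, hmem, hid Z⟩
  have hne : ∀ α, α < δ → ∃ D, D ∈ seq α := by
    intro α hα
    exact ⟨Fd cd inpa Dstar 0 0 (fun i => i.elim0),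
      hpath.closedF α hα ⟨0 + 0, Fd cd inpa Dstar 0 0⟩ (Or.inr ⟨0, 0, rfl⟩)
        (fun i => i.elim0) (fun i => i.elim0)⟩
  have hCompl : ∀ α, α < δ → ∀ Z, A α Z → A α Zᶜ := by
    rintro α hα Z ⟨D, hD, rfl⟩
    refine ⟨dcd (cd D)ᶜ, ?_, hid _⟩
    exact hpath.closedF α hα ⟨1, fun v => dcd (cd (v 0))ᶜ⟩ (Or.inl (Or.inl rfl))
      (fun _ => D) (fun _ => hD)
  have hInter : ∀ α, α < δ → ∀ Z W, A α Z → A α W → A α (Z ∩ W) := by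
    rintro α hα Z Wset ⟨D, hD, rfl⟩ ⟨D', hD', rfl⟩
    refine ⟨dcd (cd D ∩ cd D'), ?_, hid _⟩
    have := hpath.closedF α hα ⟨2, fun v => dcd (cd (v 0) ∩ cd (v 1))⟩
      (Or.inl (Or.inr (Or.inl rfl))) ![D, D'] (fun i => by fin_cases i <;> assumption)
    simpa using this
  have hCohCl : ∀ α, α < δ → ∀ X X' Wset, A α X → A α X' → A α Wset →
      A α (coh X (inpa X') (chi Wset)) := by
    rintro α hα X X' Wset ⟨D0, hD0, rfl⟩ ⟨D1, hD1, rfl⟩ ⟨D2, hD2, rfl⟩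
    refine ⟨dcd (coh (cd D0) (inpa (cd D1)) (chi (cd D2))), ?_, hid _⟩
    have := hpath.closedF α hα ⟨3, fun v => dcd (coh (cd (v 0)) (inpa (cd (v 1))) (chi (cd (v 2))))⟩
      (Or.inl (Or.inr (Or.inr rfl))) ![D0, D1, D2] (fun i => by fin_cases i <;> assumption)
    simpa using this
  have hUniv : ∀ α, α < δ → A α Set.univ := by
    intro α hα
    obtain ⟨D, hD⟩ := hne α hα
    have h1 : A α (cd D) := ⟨D, hD, rfl⟩
    have h2 := hInter α hα _ _ h1 (hCompl α hα _ h1)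
    rw [Set.inter_compl_self] at h2
    have h3 := hCompl α hα _ h2
    rwa [Set.compl_empty] at h3
  have hFd : ∀ α, α < δ → ∀ (k : ℕ) (XX XI : Fin k → Set ℕ),
      (∀ i, A α (XX i)) → (∀ i, A α (XI i)) →
      ∀ (hinf : (⋂ i, XX i).Infinite) (m : ℕ),
      (⟨Dset XX (fun i => inpa (XI i)) m,
        dset_dense XX _ (fun i => hinpa (XI i)) hinf m⟩ : DenseSet) ∈ seq α := by
    intro α hα k XX XI hXX hXI hinf m
    choose D1 hD1 hcd1 using hXX
    choose D2 hD2 hcd2 using hXI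
    set v : Fin (k + k) → DenseSet := Fin.append D1 D2 with hv
    have hvmem : ∀ i, v i ∈ seq α := by
      intro i
      refine Fin.addCases (fun j => ?_) (fun j => ?_) i
      · rw [hv, Fin.append_left]; exact hD1 j
      · rw [hv, Fin.append_right]; exact hD2 j
    have hmem := hpath.closedF α hα ⟨k + k, Fd cd inpa Dstar k m⟩ (Or.inr ⟨k, m, rfl⟩) v hvmem
    have hv1 : (fun i : Fin k => cd (v (Fin.castAdd k i))) = XX :=
      funext fun i => by rw [hv, Fin.append_left]; exact hcd1 i
    have hv2 : (fun i : Fin k => inpa (cd (v (Fin.natAdd k i)))) = fun i => inpa (XI i) :=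
      funext fun i => by rw [hv, Fin.append_right, hcd2 i]
    have hinf' : (⋂ i, cd (v (Fin.castAdd k i))).Infinite := by
      have he : (⋂ i, cd (v (Fin.castAdd k i))) = ⋂ i, XX i :=
        Set.iInter_congr (fun i => by rw [hv, Fin.append_left]; exact hcd1 i)
      rw [he]; exact hinf
    have hdense' : IsDenseCond (Dset (fun i : Fin k => cd (v (Fin.castAdd k i)))
        (fun i : Fin k => inpa (cd (v (Fin.natAdd k i)))) m) := by
      rw [hv1, hv2]; exact dset_dense XX _ (fun i => hinpa (XI i)) hinf m
    have heq : Fd cd inpa Dstar k m v = ⟨Dset XX (fun i => inpa (XI i)) m,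
        dset_dense XX _ (fun i => hinpa (XI i)) hinf m⟩ := by
      simp only [Fd, dif_pos (And.intro hinf' hdense')]
      refine (dif_pos (And.intro hinf' hdense')).trans ?_
      exact Subtype.ext (show Dset (fun i : Fin k => cd (v (Fin.castAdd k i)))
        (fun i : Fin k => inpa (cd (v (Fin.natAdd k i)))) m
          = Dset XX (fun i => inpa (XI i)) m by rw [hv1, hv2])
    have hmem' : Fd cd inpa Dstar k m v ∈ seq α := hmem
    rw [heq] at hmem'
    exact hmem'
  -- the generic reals
  have hxg : ∃ xg : Ordinal → (ℕ → Bool), ∀ α, α < δ → ∀ D ∈ seq α, ¬ covME (xg α) D := by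
    refine ⟨fun α => if h : α < δ then (hpath.avoid α h).choose else fun _ => false, ?_⟩
    intro α hα
    simp only [dif_pos hα]
    exact (hpath.avoid α hα).choose_spec
  obtain ⟨xg, hxg⟩ := hxg
  have GI : ∀ β, β < δ → ∀ (k : ℕ) (XX XI : Fin k → Set ℕ), (∀ i, A β (XX i)) →
      (∀ i, A β (XI i)) → (⋂ i, XX i).Infinite →
      (⋂ i, coh (XX i) (inpa (XI i)) (xg β)).Infinite := by
    intro β hβ k XX XI hXX hXI hinf
    by_contra hfin
    rw [Set.not_infinite] at hfin
    set m := hfin.toFinset.card + 1 with hm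
    have hmem := hFd β hβ k XX XI hXX hXI hinf m
    have hng := hxg β hβ _ hmem
    unfold covME at hng
    push_neg at hng
    obtain ⟨nn, hnn⟩ := hng
    have hext : ExtendsSeq (xg β) (List.ofFn fun i : Fin nn => xg β i) := by
      intro i hi
      simp
    obtain ⟨T, hTcard, hTsub⟩ := hnn (xg β) hext
    have hsub2 : T ⊆ hfin.toFinset := fun a ha =>
      hfin.mem_toFinset.mpr (hTsub (Finset.mem_coe.mpr ha))
    have := Finset.card_le_card hsub2
    omega
    -- codes for the generic reals, and the stage function
  set W : Ordinal → Set ℕ := fun β => {k | xg β k = true} with hWdef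
  have chiW : ∀ β, chi (W β) = xg β := by
    intro β
    funext k
    simp [chi, hWdef]
  set γf : Ordinal → Ordinal := fun β => sInf {γ | γ < δ ∧ A γ (W β)} with hγfdef
  have hγf : ∀ β, γf β < δ ∧ A (γf β) (W β) := by
    intro β
    obtain ⟨α, h1, h2⟩ := hAtotal (W β)
    exact csInf_mem (⟨α, h1, h2⟩ : {γ | γ < δ ∧ A γ (W β)}.Nonempty)
  -- the dominating stage function g
  set g : Ordinal → Ordinal := WellFounded.fix wellFounded_lt (fun α ih =>
    α ⊔ Ordinal.bsup.{u_1, u_1} α (fun β hβ => Order.succ (ih β hβ ⊔ γf (ih β hβ)))) with hgdef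
  have hgeq : ∀ α, g α = α ⊔ Ordinal.bsup.{u_1, u_1} α
      (fun β _ => Order.succ (g β ⊔ γf (g β))) := by
    intro α
    rw [hgdef]
    exact WellFounded.fix_eq _ _ α
  have hgle : ∀ α, α ≤ g α := by
    intro α; rw [hgeq]; exact le_sup_left
  have hgkey : ∀ β α, β < α → Order.succ (g β ⊔ γf (g β)) ≤ g α := by
    intro β α h
    rw [hgeq α]
    exact le_sup_of_le_right (Ordinal.le_bsup _ β h)
  have hgmono : StrictMono g := by
    intro β α h
    have := hgkey β α h
    have h2 : g β < Order.succ (g β ⊔ γf (g β)) := (Order.lt_succ _).trans_le' le_sup_left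
    exact h2.trans_le this
  have hglt : ∀ α, α < δ → g α < δ := by
    intro α
    induction α using Ordinal.induction with
    | h α ih =>
      intro hα
      rw [hgeq]
      refine sup_lt_iff.mpr ⟨hα, ?_⟩
      refine Cardinal.bsup_lt_ord_of_isRegular hκ (Cardinal.lt_ord.mp hα) ?_
      intro β hβ
      have hgβ : g β < δ := ih β hβ (hβ.trans hα)
      have hγ : γf (g β) < δ := (hγf (g β)).1
      exact hδlim.succ_lt (sup_lt_iff.mpr ⟨hgβ, hγ⟩)
    -- stage of a set, and the selectors
  have hσ : ∀ Z : Set ℕ, sInf {α | α < δ ∧ A α Z} < δ ∧ A (sInf {α | α < δ ∧ A α Z}) Z := by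
    intro Z
    obtain ⟨α, h1, h2⟩ := hAtotal Z
    exact csInf_mem (⟨α, ⟨h1, h2⟩⟩ : {α | α < δ ∧ A α Z}.Nonempty)
  set σ : Set ℕ → Ordinal := fun Z => sInf {α | α < δ ∧ A α Z} with hσdef
  set τ : Set ℕ → Ordinal := fun Z => g (σ Z) with hτdef
  set S : Set ℕ → Set ℕ := fun Z => coh Set.univ (inpa Z) (xg (τ Z)) with hSdef
  have hτδ : ∀ Z, τ Z < δ := fun Z => hglt _ (hσ Z).1
  have hSA : ∀ Z β, β < δ → σ Z ≤ β → γf (τ Z) ≤ β → A β (S Z) := by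
    intro Z β hβ h1 h2
    have hu := hUniv β hβ
    have hz : A β Z := hAmono h1 hβ (hσ Z).2
    have hw : A β (W (τ Z)) := hAmono h2 hβ (hγf (τ Z)).2
    have hc := hCohCl β hβ _ _ _ hu hz hw
    rw [chiW] at hc
    exact hc
  have FIPcore : ∀ β : Ordinal, ∀ F : Finset (Set ℕ), (∀ Z ∈ F, τ Z ≤ β) →
      (⋂ Z ∈ F, S Z).Infinite := by
    intro β
    induction β using Ordinal.induction with
    | h β ih =>
      intro F hF
      rcases F.eq_empty_or_nonempty with rfl | hFne
      · simpa using Set.infinite_univ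
      obtain ⟨Z₀, hZ₀F, hβ₀⟩ := Finset.exists_mem_eq_sup' hFne (fun Z => τ Z)
      rcases lt_or_eq_of_le (Finset.sup'_le hFne _ hF) with hlt | heqβ
      · exact ih _ hlt F (fun Z hZ => Finset.le_sup' _ hZ)
      have hβτ : τ Z₀ = β := by rw [← heqβ, hβ₀]
      have hβδ : β < δ := hβτ ▸ hτδ Z₀
      set F₁ := F.filter (fun Z => τ Z < β) with hF₁
      set F₂ := F.filter (fun Z => τ Z = β) with hF₂
      set T : Set ℕ := ⋂ Z ∈ F₁, S Z with hTdef
      have hTinf : T.Infinite := by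
        rcases F₁.eq_empty_or_nonempty with h1 | h1
        · rw [hTdef, h1]; simpa using Set.infinite_univ
        · have hβ'lt : F₁.sup' h1 (fun Z => τ Z) < β := by
            refine (Finset.sup'_lt_iff h1).mpr ?_
            intro Z hZ
            exact (Finset.mem_filter.mp hZ).2
          exact ih _ hβ'lt F₁ (fun Z hZ => Finset.le_sup' _ hZ)
      have hmemF₁ : ∀ Z ∈ F₁, A β (S Z) := by
        intro Z hZ
        have hτZ : τ Z < β := (Finset.mem_filter.mp hZ).2
        have hσlt : σ Z < σ Z₀ :=
          hgmono.lt_iff_lt.mp (show g (σ Z) < g (σ Z₀) from lt_of_lt_of_eq hτZ hβτ.symm)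
        have h3 : Order.succ (g (σ Z) ⊔ γf (g (σ Z))) ≤ g (σ Z₀) := hgkey (σ Z) (σ Z₀) hσlt
        have h4 : g (σ Z) ⊔ γf (g (σ Z)) < g (σ Z₀) := Order.succ_le_iff.mp h3
        have hγle : γf (τ Z) ≤ β := by
          calc γf (τ Z) ≤ g (σ Z) ⊔ γf (g (σ Z)) := le_sup_right
            _ ≤ g (σ Z₀) := le_of_lt h4
            _ = β := hβτ
        exact hSA Z β hβδ ((hgle (σ Z)).trans (le_of_lt hτZ)) hγle
      have hTA : A β T := by
        rw [hTdef]
        have hind : ∀ (G : Finset (Set ℕ)), (∀ Z ∈ G, A β (S Z)) → A β (⋂ Z ∈ G, S Z) := by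
          intro G
          induction G using Finset.induction_on with
          | empty => intro _; simpa using hUniv β hβδ
          | @insert a G hnotmem ihG =>
            intro hG
            rw [Finset.set_biInter_insert]
            exact hInter β hβδ _ _ (hG _ (Finset.mem_insert_self _ _))
              (ihG (fun Z hZ => hG Z (Finset.mem_insert_of_mem hZ)))
        exact hind F₁ hmemF₁
      set lst := F₂.toList with hlstdef
      set XX : Fin (lst.length + 1) → Set ℕ := Fin.snoc (fun _ => Set.univ) T with hXXdef
      set XI : Fin (lst.length + 1) → Set ℕ := Fin.snoc (fun i => lst.get i) Z₀ with hXIdef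
      have hXXA : ∀ i, A β (XX i) := by
        intro i
        refine Fin.lastCases ?_ ?_ i
        · rw [hXXdef, Fin.snoc_last]; exact hTA
        · intro j; rw [hXXdef, Fin.snoc_castSucc]; exact hUniv β hβδ
      have hXIA : ∀ i, A β (XI i) := by
        intro i
        refine Fin.lastCases ?_ ?_ i
        · rw [hXIdef, Fin.snoc_last]
          exact hAmono ((hgle (σ Z₀)).trans (le_of_eq hβτ)) hβδ (hσ Z₀).2
        · intro j
          rw [hXIdef, Fin.snoc_castSucc]
          have hmem2 : lst.get j ∈ F₂ := Finset.mem_toList.mp (lst.get_mem j)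
          have hτ2 : τ (lst.get j) = β := (Finset.mem_filter.mp hmem2).2
          exact hAmono ((hgle _).trans (le_of_eq hτ2)) hβδ (hσ _).2
      have hXXinf : (⋂ i, XX i).Infinite := by
        have heqT : (⋂ i, XX i) = T := by
          apply Set.Subset.antisymm
          · intro c hc
            have hcl := Set.mem_iInter.mp hc (Fin.last _)
            rwa [hXXdef, Fin.snoc_last] at hcl
          · intro c hc
            refine Set.mem_iInter.mpr fun i => ?_
            refine Fin.lastCases ?_ ?_ i
            · rwa [hXXdef, Fin.snoc_last]
            · intro j; rw [hXXdef, Fin.snoc_castSucc]; trivial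
        rw [heqT]; exact hTinf
      have hGI := GI β hβδ _ XX XI hXXA hXIA hXXinf
      refine hGI.mono ?_
      intro c hc
      refine Set.mem_biInter ?_
      intro Z hZF
      rcases lt_or_eq_of_le (hF Z hZF) with hlt2 | heq2
      · have hclast := Set.mem_iInter.mp hc (Fin.last _)
        rw [hXXdef, hXIdef, Fin.snoc_last, Fin.snoc_last] at hclast
        have hcT : c ∈ T := coh_subset _ _ _ hclast
        rw [hTdef] at hcT
        exact Set.mem_iInter₂.mp hcT Z (Finset.mem_filter.mpr ⟨hZF, hlt2⟩)
      · have hZF₂ : Z ∈ F₂ := Finset.mem_filter.mpr ⟨hZF, heq2⟩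
        obtain ⟨j, hj⟩ := List.mem_iff_get.mp (Finset.mem_toList.mpr hZF₂)
        have hcj := Set.mem_iInter.mp hc (Fin.castSucc j)
        rw [hXXdef, hXIdef, Fin.snoc_castSucc, Fin.snoc_castSucc] at hcj
        show c ∈ coh Set.univ (inpa Z) (xg (τ Z))
        rw [heq2, ← hj]
        exact hcj
    -- the generating family and the ultrafilter
  set Gee : Set (Set ℕ) := {Y | ∃ Z : Set ℕ, Y = S Z} ∪ {Y | Yᶜ.Finite} with hGeedef
  have hfip : ∀ t ⊆ Gee, t.Finite → (⋂₀ t).Nonempty := by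
    intro t hsub ht
    set φ : Set ℕ → Set ℕ := fun Y => if h : ∃ Z, Y = S Z then h.choose else ∅ with hφdef
    have hφspec : ∀ Y, (∃ Z, Y = S Z) → Y = S (φ Y) := by
      intro Y hY
      rw [hφdef]
      simp only [dif_pos hY]
      exact hY.choose_spec
    set F : Finset (Set ℕ) := ht.toFinset.image φ with hFdef
    have hbig : (⋂ Z ∈ F, S Z).Infinite :=
      FIPcore (F.sup fun Z => τ Z) F (fun Z hZ => Finset.le_sup hZ)
    set K : Set ℕ := ⋃ Y ∈ ht.toFinset.filter (fun Y => ¬ ∃ Z, Y = S Z), Yᶜ with hKdef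
    have hKfin : K.Finite := by
      apply Set.Finite.biUnion (Finset.finite_toSet _)
      intro Y hY
      have h1 := Finset.mem_filter.mp hY
      have h2 : Y ∈ Gee := hsub (ht.mem_toFinset.mp h1.1)
      rcases h2 with h2 | h2
      · exact absurd h2 h1.2
      · exact h2
    have hsub2 : (⋂ Z ∈ F, S Z) \ K ⊆ ⋂₀ t := by
      intro c hc
      rintro Y hY
      by_cases hEx : ∃ Z, Y = S Z
      · have hφF : φ Y ∈ F := Finset.mem_image_of_mem φ (ht.mem_toFinset.mpr hY)
        have hcS : c ∈ S (φ Y) := Set.mem_iInter₂.mp hc.1 (φ Y) hφF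
        rwa [← hφspec Y hEx] at hcS
      · have hYK : Yᶜ ⊆ K :=
          Set.subset_biUnion_of_mem (u := fun Y => Yᶜ)
            (Finset.mem_coe.mpr (Finset.mem_filter.mpr ⟨ht.mem_toFinset.mpr hY, hEx⟩))
        by_contra hcY
        exact hc.2 (hYK hcY)
    exact Set.Nonempty.mono hsub2 (hbig.diff hKfin).nonempty
  have hNeBot : (Filter.generate Gee).NeBot := Filter.generate_neBot_iff.mpr hfip
  set u : Ultrafilter ℕ := @Ultrafilter.of _ (Filter.generate Gee) hNeBot with hudef
  have hmemu : ∀ Y ∈ Gee, Y ∈ u := by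
    intro Y hY
    exact Ultrafilter.of_le (Filter.generate Gee) (Filter.mem_generate_of_mem hY)
  refine ⟨u, ?_, ?_⟩
  · intro a hpure
    have h1 : ({a}ᶜ : Set ℕ) ∈ u := hmemu _ (Or.inr (by simp))
    rw [hpure] at h1
    simp at h1
  · intro I hI
    obtain ⟨e, hemono, he0, hesucc⟩ := hI.endpoints
    have hrange : (Set.range e).Infinite := Set.infinite_range_of_injective hemono.injective
    obtain ⟨hi0, hisucc⟩ := hinpa' (Set.range e) hrange e hemono rfl
    have hblocks : ∀ n, I n = inpa (Set.range e) n := by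
      intro n
      cases n with
      | zero => rw [he0, hi0]
      | succ n => rw [hesucc n, hisucc n]
    refine ⟨S (Set.range e), hmemu _ (Or.inl ⟨Set.range e, rfl⟩), ?_⟩
    intro n
    rw [hblocks n]
    exact coh_selector (hinpa (Set.range e)) _ n
end
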